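/- Let φ : X → ℝ ∪ {∞} be a proper convex function, (x̄, v̄) ∈ gph ∂φ, and suppose z ∈ D∂φ(x̄|v̄)(w) with z ∈ T_{∂φ(x̄)}(v̄) and w ∈ T_{∂φ*(v̄)}(x̄). Then ⟨z, w⟩ = 0. -/
import Mathlib


open Filter Topology Metric Set
open scoped RealInnerProductSpace NNReal ENNReal

noncomputable section

/-- Bouligand (contingent) tangent cone. -/
def tanCone {G : Type*} [AddCommGroup G] [Module ℝ G] [TopologicalSpace G]
    (s : Set G) (x : G) : Set G :=
  {w | ∃ (t : ℕ → ℝ) (wk : ℕ → G), (∀ n, 0 < t n) ∧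
    Tendsto t atTop (𝓝 0) ∧ Tendsto wk atTop (𝓝 w) ∧ ∀ n, x + t n • wk n ∈ s}

variable {E F : Type*} [NormedAddCommGroup E] [InnerProductSpace ℝ E]
  [NormedAddCommGroup F] [InnerProductSpace ℝ F]

/-- Graph of a set-valued mapping. -/
def gph (S : E → Set F) : Set (E × F) := {p | p.2 ∈ S p.1}

/-- Graphical derivative. -/
def gder (S : E → Set F) (x : E) (y : F) (w : E) : Set F :=
  {z | (w, z) ∈ tanCone (gph S) (x, y)}

/-- Local closedness of the graph around a point. -/
def LocallyClosedGraph (S : E → Set F) (x : E) (y : F) : Prop :=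
  ∃ U ∈ 𝓝 ((x, y) : E × F), IsClosed (U ∩ gph S)

/-- Metric subregularity of a set-valued mapping at `x` for `y`. -/
def MetrSubreg (S : E → Set F) (x : E) (y : F) : Prop :=
  ∃ κ : ℝ≥0, ∃ ε : ℝ, 0 < ε ∧ ∀ x' ∈ ball x ε,
    EMetric.infEdist x' {u | y ∈ S u} ≤ (κ : ℝ≥0∞) * EMetric.infEdist y (S x')

/-- Convex subdifferential of an extended-real-valued function. -/
def subdiff (φ : E → EReal) (x : E) : Set E :=
  {v | ∀ u, φ x + ((⟪v, u - x⟫ : ℝ) : EReal) ≤ φ u}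

/-- Properness. -/
def ProperFn (φ : E → EReal) : Prop := (∀ x, φ x ≠ ⊥) ∧ ∃ x, φ x ≠ ⊤

/-- Convexity via the epigraph. -/
def ConvexFn (φ : E → EReal) : Prop := Convex ℝ {p : E × ℝ | φ p.1 ≤ (p.2 : EReal)}

/-- Fenchel conjugate. -/
def conjFn (φ : E → EReal) (v : E) : EReal := ⨆ x, ((⟪v, x⟫ : ℝ) : EReal) - φ x

/-- Second subderivative. -/
def secondSubderiv (φ : E → EReal) (x v w : E) : EReal :=
  Filter.liminf (fun p : ℝ × E =>
    (((2 / p.1 ^ 2 : ℝ)) : EReal) *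
      (φ (x + p.1 • p.2) - φ x - ((p.1 * ⟪v, p.2⟫ : ℝ) : EReal)))
    ((𝓝[>] (0 : ℝ)) ×ˢ 𝓝 w)

/-- Quadratic growth condition at `x` for `v`. -/
def QuadGrowth (φ : E → EReal) (x v : E) : Prop :=
  ∃ c : ℝ, 0 < c ∧ ∃ ε : ℝ, 0 < ε ∧ ∀ u ∈ ball x ε,
    φ x + ((⟪v, u - x⟫ + c / 2 * (infDist u {u' | v ∈ subdiff φ u'}) ^ 2 : ℝ) : EReal) ≤ φ u


lemma subdiff_finite (φ : E → EReal) (hp : ProperFn φ) {x v : E}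
    (h : v ∈ subdiff φ x) : ∃ a : ℝ, φ x = (a : EReal) := by
  obtain ⟨hbot, u, hu⟩ := hp
  have hx : φ x ≠ ⊤ := by
    intro htop
    have h1 := h u
    rw [htop, EReal.top_add_of_ne_bot (by simp)] at h1
    exact hu (top_le_iff.mp h1)
  exact ⟨(φ x).toReal, (EReal.coe_toReal hx (hbot x)).symm⟩

lemma subdiff_mono (φ : E → EReal) (hp : ProperFn φ) {x1 v1 x2 v2 : E}
    (h1 : v1 ∈ subdiff φ x1) (h2 : v2 ∈ subdiff φ x2) :
    0 ≤ ⟪v1 - v2, x1 - x2⟫ := by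
  obtain ⟨a, ha⟩ := subdiff_finite φ hp h1
  obtain ⟨b, hb⟩ := subdiff_finite φ hp h2
  have i1 := h1 x2
  rw [ha, hb, ← EReal.coe_add, EReal.coe_le_coe_iff] at i1
  have i2 := h2 x1
  rw [ha, hb, ← EReal.coe_add, EReal.coe_le_coe_iff] at i2
  have e : ⟪v1 - v2, x1 - x2⟫ = -(⟪v1, x2 - x1⟫ + ⟪v2, x1 - x2⟫) := by
    simp [inner_sub_left, inner_sub_right]; ring
  rw [e]
  linarith

lemma fenchel_eq (φ : E → EReal) (hp : ProperFn φ) {x v : E} {a : ℝ}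
    (ha : φ x = (a : EReal)) (h : v ∈ subdiff φ x) :
    conjFn φ v = ((⟪v, x⟫ - a : ℝ) : EReal) := by
  apply le_antisymm
  · apply iSup_le
    intro u
    have hu := h u
    rw [ha] at hu
    rcases eq_top_or_lt_top (φ u) with htop | hlt
    · rw [htop]
      simp
    · have hb : φ u ≠ ⊥ := (hp.1 u)
      obtain ⟨b, hbeq⟩ : ∃ b : ℝ, φ u = (b : EReal) :=
        ⟨(φ u).toReal, (EReal.coe_toReal hlt.ne hb).symm⟩
      rw [hbeq, ← EReal.coe_add, EReal.coe_le_coe_iff] at hu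
      rw [hbeq, ← EReal.coe_sub, EReal.coe_le_coe_iff]
      have : ⟪v, u - x⟫ = ⟪v, u⟫ - ⟪v, x⟫ := inner_sub_right _ _ _
      linarith
  · have : ((⟪v, x⟫ - a : ℝ) : EReal) = ((⟪v, x⟫ : ℝ) : EReal) - φ x := by
      rw [ha, ← EReal.coe_sub]
    rw [this]
    exact le_iSup (fun u => ((⟪v, u⟫ : ℝ) : EReal) - φ u) x

/-- if `z ∈ D∂φ(xb|vb)(w)` with `z ∈ T_{∂φ(xb)}(vb)` and
`w ∈ T_{∂φ*(vb)}(xb)`, then `⟨z,w⟩ = 0`. -/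
theorem stmt8 {E : Type*} [NormedAddCommGroup E] [InnerProductSpace ℝ E]
    [FiniteDimensional ℝ E]
    (φ : E → EReal) (hproper : ProperFn φ) (hconv : ConvexFn φ)
    (xb vb : E) (hsub : vb ∈ subdiff φ xb) (w z : E)
    (hz : z ∈ gder (subdiff φ) xb vb w)
    (hzT : z ∈ tanCone (subdiff φ xb) vb)
    (hwT : w ∈ tanCone (subdiff (conjFn φ) vb) xb) :
    ⟪z, w⟫ = 0 := by
  obtain ⟨a, ha⟩ := subdiff_finite φ hproper hsub
  -- Part 1: from the graphical derivative, monotonicity gives ⟪z,w⟫ ≥ 0.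
  obtain ⟨t, pk, htpos, ht0, hpk, hmem⟩ := hz
  have hge : 0 ≤ ⟪z, w⟫ := by
    have key : ∀ n, 0 ≤ ⟪(pk n).2, (pk n).1⟫ := by
      intro n
      have hm : vb + t n • (pk n).2 ∈ subdiff φ (xb + t n • (pk n).1) := hmem n
      have hmono := subdiff_mono φ hproper hm hsub
      have e : ⟪vb + t n • (pk n).2 - vb, xb + t n • (pk n).1 - xb⟫
          = t n * (t n * ⟪(pk n).2, (pk n).1⟫) := by
        rw [add_sub_cancel_left, add_sub_cancel_left, real_inner_smul_left,
          real_inner_smul_right]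
      rw [e] at hmono
      by_contra hneg
      push_neg at hneg
      have := mul_neg_of_pos_of_neg (htpos n) (mul_neg_of_pos_of_neg (htpos n) hneg)
      linarith
    have hlim : Tendsto (fun n => ⟪(pk n).2, (pk n).1⟫) atTop (𝓝 ⟪z, w⟫) :=
      ((continuous_snd.tendsto _).comp hpk).inner ((continuous_fst.tendsto _).comp hpk)
    exact ge_of_tendsto' hlim key
  -- Part 2: the two tangent cone conditions give ⟪z,w⟫ ≤ 0.
  obtain ⟨s, ζ, hspos, hs0, hζ, hζmem⟩ := hzT
  obtain ⟨r, ω, hrpos, hr0, hω, hωmem⟩ := hwT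
  have hle : ⟪z, w⟫ ≤ 0 := by
    have key : ∀ n, ⟪ζ n, ω n⟫ ≤ 0 := by
      intro n
      have hv : vb + s n • ζ n ∈ subdiff φ xb := hζmem n
      have hc1 := fenchel_eq φ hproper ha hsub
      have hc2 := fenchel_eq φ hproper ha hv
      have hx : xb + r n • ω n ∈ subdiff (conjFn φ) vb := hωmem n
      have hi := hx (vb + s n • ζ n)
      rw [hc1, hc2, ← EReal.coe_add, EReal.coe_le_coe_iff] at hi
      have e1 : ⟪xb + r n • ω n, vb + s n • ζ n - vb⟫
          = s n * ⟪ζ n, xb⟫ + s n * (r n * ⟪ω n, ζ n⟫) := by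
        rw [add_sub_cancel_left, inner_add_left, real_inner_smul_right,
          real_inner_smul_right, real_inner_smul_left, real_inner_comm xb (ζ n)]
      have e2 : ⟪vb + s n • ζ n, xb⟫ = ⟪vb, xb⟫ + s n * ⟪ζ n, xb⟫ := by
        rw [inner_add_left, real_inner_smul_left]
      rw [e1, e2] at hi
      have h1 : s n * (r n * ⟪ω n, ζ n⟫) ≤ 0 := by linarith
      have h2 : ⟪ω n, ζ n⟫ ≤ 0 := by
        by_contra hpos
        push_neg at hpos
        have := mul_pos (hspos n) (mul_pos (hrpos n) hpos)
        linarith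
      rw [real_inner_comm] at h2
      exact h2
    have hlim : Tendsto (fun n => ⟪ζ n, ω n⟫) atTop (𝓝 ⟪z, w⟫) := hζ.inner hω
    exact le_of_tendsto' hlim key
  linarith

end
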